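/- Let X be a complex Hilbert space with Hilbert basis (b_i)_{i∈ι}, let μ : ι → ℂ be a bounded function, and let T : X → X be a continuous linear map satisfying T η = ∑'_{i∈ι} μ(i)·⟨b_i, η⟩ • b_i for every η ∈ X. Then the spectrum of T equals the closure of the range of μ: spectrum(T) = closure {μ(i) : i ∈ ι}. -/

import Mathlib

open scoped ComplexConjugate ENNReal NNReal

lemma diag_memℓp {ι : Type*} (ν : ι → ℂ) {M : ℝ} (hM0 : 0 ≤ M) (hM : ∀ i, ‖ν i‖ ≤ M)
    (f : lp (fun _ : ι => ℂ) 2) : Memℓp (fun i => ν i * f i) 2 := by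
  apply memℓp_gen
  have h2 : (0:ℝ) < (2 : ℝ≥0∞).toReal := by norm_num
  have hsum := (lp.memℓp f).summable h2
  have : Summable fun i => M ^ (2 : ℝ≥0∞).toReal * ‖f i‖ ^ (2 : ℝ≥0∞).toReal :=
    hsum.mul_left _
  refine this.of_nonneg_of_le (fun i => ?_) (fun i => ?_)
  · positivity
  · rw [← Real.mul_rpow (by positivity) (by positivity)]
    refine Real.rpow_le_rpow (by positivity) ?_ (by norm_num)
    rw [norm_mul]
    exact mul_le_mul_of_nonneg_right (hM i) (norm_nonneg _)

lemma diag_norm_le {ι : Type*} (ν : ι → ℂ) {M : ℝ} (hM0 : 0 ≤ M) (hM : ∀ i, ‖ν i‖ ≤ M)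
    (f : lp (fun _ : ι => ℂ) 2) :
    ‖(⟨fun i => ν i * f i, diag_memℓp ν hM0 hM f⟩ : lp (fun _ : ι => ℂ) 2)‖ ≤ M * ‖f‖ := by
  have h2 : (0:ℝ) < (2 : ℝ≥0∞).toReal := by norm_num
  have key : ‖(⟨fun i => ν i * f i, diag_memℓp ν hM0 hM f⟩ : lp (fun _ : ι => ℂ) 2)‖ ^ (2 : ℝ≥0∞).toReal
      ≤ (M * ‖f‖) ^ (2 : ℝ≥0∞).toReal := by
    rw [lp.norm_rpow_eq_tsum h2, Real.mul_rpow hM0 (norm_nonneg _),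
      lp.norm_rpow_eq_tsum h2]
    rw [← tsum_mul_left]
    refine Summable.tsum_le_tsum (fun i => ?_) ?_ ?_
    · show ‖ν i * f i‖ ^ (2 : ℝ≥0∞).toReal ≤ _
      rw [← Real.mul_rpow hM0 (norm_nonneg _)]
      refine Real.rpow_le_rpow (by positivity) ?_ (by norm_num)
      rw [norm_mul]
      exact mul_le_mul_of_nonneg_right (hM i) (norm_nonneg _)
    · exact ((diag_memℓp ν hM0 hM f).summable h2)
    · exact ((lp.memℓp f).summable h2).mul_left _
  have h2' : (2 : ℝ≥0∞).toReal = ((2:ℕ):ℝ) := by norm_num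
  rw [h2', Real.rpow_natCast, Real.rpow_natCast] at key
  exact (pow_le_pow_iff_left₀ (norm_nonneg _) (by positivity) (by norm_num)).mp key

lemma diag_exists {X : Type*} [NormedAddCommGroup X] [InnerProductSpace ℂ X] [CompleteSpace X]
    {ι : Type*} (b : HilbertBasis ι ℂ X) (ν : ι → ℂ) {M : ℝ} (hM0 : 0 ≤ M)
    (hM : ∀ i, ‖ν i‖ ≤ M) :
    ∃ S : X →L[ℂ] X, ∀ (η : X) (i : ι), b.repr (S η) i = ν i * b.repr η i := by
  set Flin : lp (fun _ : ι => ℂ) 2 →ₗ[ℂ] lp (fun _ : ι => ℂ) 2 :=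
    { toFun := fun f => ⟨fun i => ν i * f i, diag_memℓp ν hM0 hM f⟩
      map_add' := by
        intro f g
        apply lp.ext
        funext i
        simp [lp.coeFn_add, Pi.add_apply, mul_add]
        rfl
      map_smul' := by
        intro c f
        apply lp.ext
        funext i
        simp [lp.coeFn_smul, Pi.smul_apply, smul_eq_mul]
        ring }
  have Fcont := Flin.mkContinuous M (fun f => diag_norm_le ν hM0 hM f)
  refine ⟨(b.repr.symm.toContinuousLinearEquiv.toContinuousLinearMap.comp
    (Flin.mkContinuous M (fun f => diag_norm_le ν hM0 hM f))).comp
    b.repr.toContinuousLinearEquiv.toContinuousLinearMap, ?_⟩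
  intro η i
  simp only [ContinuousLinearMap.comp_apply, ContinuousLinearEquiv.coe_coe,
    LinearIsometryEquiv.coe_toContinuousLinearEquiv, LinearIsometryEquiv.apply_symm_apply]
  rfl

/-- If `T` is a continuous linear operator on a complex Hilbert space acting
diagonally on a Hilbert basis `b` with bounded symbol `μ : ι → ℂ`, i.e.
`T η = ∑' i, μ i ⟨b i, η⟩ • b i`, then the spectrum of `T` is the closure of the range
of `μ`. -/
theorem stmt_3 {X : Type*} [NormedAddCommGroup X] [InnerProductSpace ℂ X] [CompleteSpace X]
    {ι : Type*} (b : HilbertBasis ι ℂ X) (μ : ι → ℂ)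
    (hμ : ∃ M : ℝ, ∀ i : ι, ‖μ i‖ ≤ M)
    (T : X →L[ℂ] X)
    (hT : ∀ η : X, T η = ∑' i : ι, (μ i * (inner ℂ (b i) η : ℂ)) • b i) :
    spectrum ℂ T = closure (Set.range μ) := by
  classical
  obtain ⟨M, hM⟩ := hμ
  have hM' : ∀ i, ‖μ i‖ ≤ max M 0 := fun i => le_trans (by simpa using hM i) (le_max_left _ _)
  have hTr : ∀ (η : X) (i : ι), b.repr (T η) i = μ i * b.repr η i := by
    obtain ⟨S, hS⟩ := diag_exists b μ (le_max_right M 0) hM'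
    have hTS : ∀ η, T η = S η := by
      intro η
      rw [hT η]
      have h2 : (fun i => (μ i * (inner ℂ (b i) η : ℂ)) • b i)
          = fun i => b.repr (S η) i • b i := by
        funext i; rw [hS, b.repr_apply_apply]
      rw [h2]
      exact (b.hasSum_repr (S η)).tsum_eq
    intro η i; rw [hTS η]; exact hS η i
  have halg : ∀ (z : ℂ) (η : X), (algebraMap ℂ (X →L[ℂ] X) z - T) η = z • η - T η := by
    intro z η
    rw [ContinuousLinearMap.sub_apply, Algebra.algebraMap_eq_smul_one,
      ContinuousLinearMap.smul_apply, ContinuousLinearMap.one_apply]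
  refine Set.Subset.antisymm ?_ (closure_minimal ?_ (spectrum.isClosed T))
  · intro z hz
    by_contra hzc
    rw [Metric.mem_closure_iff] at hzc
    push_neg at hzc
    obtain ⟨ε, hε, hsep⟩ := hzc
    have hsep' : ∀ i, ε ≤ ‖z - μ i‖ := fun i => by
      have := hsep (μ i) (Set.mem_range_self i)
      rwa [dist_eq_norm] at this
    obtain ⟨S, hS⟩ := diag_exists b (fun i => (z - μ i)⁻¹) (M := ε⁻¹)
      (by positivity) (fun i => by
        rw [norm_inv]
        exact inv_anti₀ hε (hsep' i))
    have hrs : ∀ (η : X) (i : ι),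
        b.repr ((algebraMap ℂ (X →L[ℂ] X) z - T) η) i = (z - μ i) * b.repr η i := by
      intro η i
      rw [halg, map_sub, LinearIsometryEquiv.map_smul, lp.coeFn_sub, Pi.sub_apply,
        lp.coeFn_smul, Pi.smul_apply, hTr, smul_eq_mul, sub_mul]
    have hne : ∀ i, z - μ i ≠ 0 := fun i h => by
      have := hsep' i; rw [h, norm_zero] at this; exact absurd (lt_of_lt_of_le hε this) (lt_irrefl _)
    have h1 : (algebraMap ℂ (X →L[ℂ] X) z - T) * S = 1 := by
      ext η
      apply b.repr.injective
      apply lp.ext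
      funext i
      rw [ContinuousLinearMap.mul_apply, hrs, hS, ContinuousLinearMap.one_apply]
      field_simp
      exact mul_div_cancel_left₀ _ (hne i)
    have h2 : S * (algebraMap ℂ (X →L[ℂ] X) z - T) = 1 := by
      ext η
      apply b.repr.injective
      apply lp.ext
      funext i
      rw [ContinuousLinearMap.mul_apply, hS, hrs, ContinuousLinearMap.one_apply]
      field_simp
      exact mul_div_cancel_left₀ _ (hne i)
    exact spectrum.mem_iff.mp hz ⟨⟨_, S, h1, h2⟩, rfl⟩
  · rintro _ ⟨i, rfl⟩
    rw [spectrum.mem_iff]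
    rintro ⟨u, hu⟩
    have hTbi : T (b i) = μ i • b i := by
      apply b.repr.injective
      apply lp.ext
      funext j
      rw [hTr, LinearIsometryEquiv.map_smul, lp.coeFn_smul, Pi.smul_apply, smul_eq_mul,
        b.repr_apply_apply, orthonormal_iff_ite.mp b.orthonormal j i]
      by_cases h : j = i
      · subst h; simp
      · simp [h]
    have hbi : (algebraMap ℂ (X →L[ℂ] X) (μ i) - T) (b i) = 0 := by
      rw [halg, hTbi, sub_self]
    have hzero : b i = 0 := by
      have h1 : ((↑u⁻¹ * ↑u : X →L[ℂ] X)) (b i) = b i := by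
        rw [u.inv_mul, ContinuousLinearMap.one_apply]
      rw [ContinuousLinearMap.mul_apply, hu, hbi, map_zero] at h1
      exact h1.symm
    have hnorm := b.orthonormal.1 i
    rw [hzero, norm_zero] at hnorm
    norm_num at hnorm
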